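/- Let G be a finite simple graph with vertex set V and edge set E, let S ⊆ E, let k be a natural number, and let v, v' be two distinct vertices of G. Suppose P₁, …, P_{k+2} are pairwise distinct simple paths from v to v' such that any two of them share no vertex other than v and v', and each P_i contains at least one edge of S. Then every set T ⊆ V with |T| ≤ k such that the subgraph of G induced on V ∖ T contains no S-cycle must contain v or v'. -/

import Mathlib

open SimpleGraph

/-- If a path from `v` to `v'` contains the edge `s(v, v')`, it is the single-edge path. -/
lemma aux_single_edge {V : Type} {G : SimpleGraph V} {v v' : V} (hne : v ≠ v')
    {q : G.Walk v v'} (hq : q.IsPath) (he : s(v, v') ∈ q.edges) :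
    ∃ h : G.Adj v v', q = SimpleGraph.Walk.cons h SimpleGraph.Walk.nil := by
  cases q with
  | nil => exact absurd rfl hne
  | cons h' q' =>
    rename_i w
    rw [SimpleGraph.Walk.edges_cons, List.mem_cons] at he
    rw [SimpleGraph.Walk.cons_isPath_iff] at hq
    rcases he with he | he
    · have hw : w = v' := by
        rw [Sym2.eq_iff] at he
        rcases he with ⟨-, h1⟩ | ⟨h1, h2⟩
        · exact h1.symm
        · exact absurd h2 hne.symm
      subst hw
      have : q' = SimpleGraph.Walk.nil := SimpleGraph.Walk.isPath_iff_eq_nil.mp hq.1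
      exact ⟨h', by rw [this]⟩
    · exact absurd (q'.fst_mem_support_of_mem_edges he) hq.2

/-- If `P₁, …, P_{k+2}` are pairwise distinct simple `v`–`v'` paths,
pairwise sharing no vertex other than `v` and `v'`, each containing an edge of `S`,
then every `T ⊆ V` with `|T| ≤ k` hitting all `S`-cycles (no simple cycle of
`G[V ∖ T]` contains an edge of `S`) must contain `v` or `v'`. -/
theorem paths_force_endpoint_in_solution {V : Type} [Fintype V]
    (G : SimpleGraph V) (S : Set (Sym2 V)) (hS : S ⊆ G.edgeSet) (k : ℕ)
    (v v' : V) (hvv' : v ≠ v')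
    (p : Fin (k + 2) → G.Walk v v')
    (hpath : ∀ i, (p i).IsPath)
    (hdist : ∀ i j, i ≠ j → p i ≠ p j)
    (hintdisj : ∀ i j, i ≠ j →
      ∀ x, x ∈ (p i).support → x ∈ (p j).support → x = v ∨ x = v')
    (hSedge : ∀ i, ∃ e ∈ (p i).edges, e ∈ S)
    (T : Set V) (hT : T.ncard ≤ k)
    (hhit : ∀ (u : V) (c : G.Walk u u), c.IsCycle → (∀ x ∈ c.support, x ∉ T) →
      ∀ e ∈ c.edges, e ∉ S) :
    v ∈ T ∨ v' ∈ T := by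
  classical
  by_contra hcon
  push_neg at hcon
  obtain ⟨hv, hv'⟩ := hcon
  -- pigeonhole: at most k paths meet T
  set B : Finset (Fin (k + 2)) :=
    Finset.univ.filter (fun i => ∃ x ∈ (p i).support, x ∈ T) with hB
  have hTfin : T.Finite := T.toFinite
  have hBcard : B.card ≤ k := by
    have : B.card ≤ hTfin.toFinset.card := by
      apply Finset.card_le_card_of_injOn
        (fun i => if h : ∃ x ∈ (p i).support, x ∈ T then h.choose else v)
      · intro i hi
        rw [Finset.mem_coe, hB, Finset.mem_filter] at hi
        dsimp only; rw [Finset.mem_coe, dif_pos hi.2, Set.Finite.mem_toFinset]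
        exact hi.2.choose_spec.2
      · intro i hi j hj hij
        by_contra hne
        rw [Finset.mem_coe, hB, Finset.mem_filter] at hi hj
        simp only at hij
        rw [dif_pos hi.2, dif_pos hj.2] at hij
        have h1 := hi.2.choose_spec
        have h2 := hj.2.choose_spec
        rcases hintdisj i j hne _ h1.1 (hij ▸ h2.1) with h | h
        · exact hv (h ▸ h1.2)
        · exact hv' (h ▸ h1.2)
    have h2 : hTfin.toFinset.card = T.ncard := (Set.ncard_eq_toFinset_card T hTfin).symm
    omega
  have hcard2 : 1 < Bᶜ.card := by
    rw [Finset.card_compl, Fintype.card_fin]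
    omega
  obtain ⟨i, hi, j, hj, hij⟩ := Finset.one_lt_card.mp hcard2
  have hgood : ∀ l ∈ Bᶜ, ∀ x ∈ (p l).support, x ∉ T := by
    intro l hl x hx hxT
    rw [Finset.mem_compl, hB, Finset.mem_filter] at hl
    exact hl ⟨Finset.mem_univ l, x, hx, hxT⟩
  -- build the cycle
  set c : G.Walk v v := (p i).append (p j).reverse with hc
  have hsup : c.support = (p i).support ++ ((p j).reverse.support).tail :=
    SimpleGraph.Walk.support_append _ _
  have hcyc : c.IsCycle := by
    rw [SimpleGraph.Walk.isCycle_def]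
    refine ⟨⟨?_⟩, ?_, ?_⟩
    · -- edges nodup
      rw [hc, SimpleGraph.Walk.edges_append, SimpleGraph.Walk.edges_reverse]
      rw [List.nodup_append]
      refine ⟨(hpath i).isTrail.edges_nodup, List.nodup_reverse.mpr (hpath j).isTrail.edges_nodup, ?_⟩
      intro e hei e' hej he'; subst he'
      rw [List.mem_reverse] at hej
      -- a shared edge must be s(v, v')
      induction e with
      | h a b =>
        have hadj : G.Adj a b := (p i).adj_of_mem_edges hei
        have hav : a = v ∨ a = v' := hintdisj i j hij a
          ((p i).fst_mem_support_of_mem_edges hei) ((p j).fst_mem_support_of_mem_edges hej)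
        have hbv : b = v ∨ b = v' := hintdisj i j hij b
          ((p i).snd_mem_support_of_mem_edges hei) ((p j).snd_mem_support_of_mem_edges hej)
        have heq : s(a, b) = s(v, v') := by
          rcases hav with rfl | rfl <;> rcases hbv with rfl | rfl
          · exact absurd rfl hadj.ne
          · rfl
          · exact Sym2.eq_swap
          · exact absurd rfl hadj.ne
        rw [heq] at hei hej
        obtain ⟨h1, hq1⟩ := aux_single_edge hvv' (hpath i) hei
        obtain ⟨h2, hq2⟩ := aux_single_edge hvv' (hpath j) hej
        exact hdist i j hij (hq1.trans hq2.symm)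
    · -- not nil
      intro hnil
      have : c.length = 0 := by rw [hnil]; rfl
      rw [hc, SimpleGraph.Walk.length_append] at this
      exact hvv' (SimpleGraph.Walk.eq_of_length_eq_zero (Nat.eq_zero_of_add_eq_zero_right this))
    · -- support tail nodup
      rw [hc, SimpleGraph.Walk.tail_support_append]
      rw [List.nodup_append]
      have hnodi := (hpath i).support_nodup
      have hnodj := ((hpath j).reverse).support_nodup
      have hconsi := (p i).support_eq_cons
      have hconsj := (p j).reverse.support_eq_cons
      refine ⟨?_, ?_, ?_⟩
      · rw [hconsi, List.nodup_cons] at hnodi; exact hnodi.2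
      · rw [hconsj, List.nodup_cons] at hnodj; exact hnodj.2
      · intro x hx1 y hx2 hxy; subst hxy
        have hx1' : x ∈ (p i).support := by rw [hconsi]; exact List.mem_cons_of_mem _ hx1
        have hx2' : x ∈ (p j).support := by
          have : x ∈ (p j).reverse.support := by
            rw [hconsj]; exact List.mem_cons_of_mem _ hx2
          rwa [SimpleGraph.Walk.support_reverse, List.mem_reverse] at this
        rcases hintdisj i j hij x hx1' hx2' with rfl | rfl
        · rw [hconsi, List.nodup_cons] at hnodi; exact hnodi.1 hx1
        · rw [hconsj, List.nodup_cons] at hnodj; exact hnodj.1 hx2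
  -- support avoids T
  have hsupT : ∀ x ∈ c.support, x ∉ T := by
    intro x hx
    rw [hsup, List.mem_append] at hx
    rcases hx with hx | hx
    · exact hgood i hi x hx
    · have : x ∈ (p j).support := by
        have : x ∈ (p j).reverse.support := List.mem_of_mem_tail hx
        rwa [SimpleGraph.Walk.support_reverse, List.mem_reverse] at this
      exact hgood j hj x this
  obtain ⟨e, he, heS⟩ := hSedge i
  refine hhit v c hcyc hsupT e ?_ heS
  rw [hc, SimpleGraph.Walk.edges_append, List.mem_append]
  exact Or.inl he
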